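/- The number of permutations of [n] all of whose left-to-right minima occur at odd positions satisfies the recurrence p_n = n·p_{n-1} for odd n and p_n = (n-1)·p_{n-1} for even n, with p_0 = 1. -/

import Mathlib

/-- A permutation `a` of `Fin n` has all of its left-to-right minima at odd
(1-indexed) positions: whenever `a i` is `min (a 0, ..., a i)`, the position
`i+1` is odd. -/
def lrmOddPerm (n : ℕ) (a : Equiv.Perm (Fin n)) : Prop :=
  ∀ i : Fin n, (∀ j : Fin n, j ≤ i → a i ≤ a j) → Odd (i.val + 1)

/-- `permCount n` is the number of permutations of `[n]` all of whose
left-to-right minima occur at odd positions. -/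
noncomputable def permCount (n : ℕ) : ℕ :=
  Nat.card {a : Equiv.Perm (Fin n) // lrmOddPerm n a}

/-- Insert value `v` at the last position, the rest given by `b` composed with
the order embedding `Fin n ↪ Fin (n+1)` missing `v`. -/
def insLast (n : ℕ) (v : Fin (n + 1)) (b : Equiv.Perm (Fin n)) :
    Equiv.Perm (Fin (n + 1)) :=
  (finSuccEquiv' (Fin.last n)).trans (b.optionCongr.trans (finSuccEquiv' v).symm)

lemma insLast_last (n : ℕ) (v : Fin (n + 1)) (b : Equiv.Perm (Fin n)) :
    insLast n v b (Fin.last n) = v := by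
  simp [insLast, finSuccEquiv'_at, finSuccEquiv'_symm_none]

lemma insLast_castSucc (n : ℕ) (v : Fin (n + 1)) (b : Equiv.Perm (Fin n))
    (i : Fin n) : insLast n v b i.castSucc = v.succAbove (b i) := by
  have h1 : (finSuccEquiv' (Fin.last n)) i.castSucc = some i := by
    rw [← Fin.succAbove_last_apply, finSuccEquiv'_succAbove]
  simp [insLast, h1, finSuccEquiv'_symm_some]

lemma lrm_insLast (n : ℕ) (v : Fin (n + 1)) (b : Equiv.Perm (Fin n)) :
    lrmOddPerm (n + 1) (insLast n v b) ↔
      lrmOddPerm n b ∧ (v = 0 → Odd (n + 1)) := by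
  constructor
  · intro h
    constructor
    · intro k hk
      have hj : ∀ j : Fin (n + 1), j ≤ k.castSucc →
          insLast n v b k.castSucc ≤ insLast n v b j := by
        intro j hjle
        obtain ⟨j', rfl⟩ | rfl := Fin.eq_castSucc_or_eq_last j
        · rw [insLast_castSucc, insLast_castSucc, Fin.succAbove_le_succAbove_iff]
          exact hk j' (by simpa using hjle)
        · exfalso
          have h1 : (Fin.last n : Fin (n + 1)).val ≤ (k.castSucc).val := hjle
          have h2 := k.isLt
          simp [Fin.val_last, Fin.coe_castSucc] at h1
          omega
      have := h k.castSucc hj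
      simpa using this
    · intro hv
      have := h (Fin.last n) (fun j _ => by
        rw [insLast_last, hv]; exact Fin.zero_le _)
      simpa using this
  · rintro ⟨hb, hv⟩ i hi
    obtain ⟨k, rfl⟩ | rfl := Fin.eq_castSucc_or_eq_last i
    · have hk : ∀ j : Fin n, j ≤ k → b k ≤ b j := by
        intro j hjle
        have := hi j.castSucc (by simpa using hjle)
        rwa [insLast_castSucc, insLast_castSucc,
          Fin.succAbove_le_succAbove_iff] at this
      simpa using hb k hk
    · have h0 : v = 0 := by
        have := hi ((insLast n v b).symm 0) (Fin.le_last _)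
        rw [insLast_last, Equiv.apply_symm_apply] at this
        exact Fin.le_zero_iff.mp this
      simpa using hv h0

lemma insLast_bijective (n : ℕ) :
    Function.Bijective (fun p : Fin (n + 1) × Equiv.Perm (Fin n) =>
      insLast n p.1 p.2) := by
  constructor
  · rintro ⟨v, b⟩ ⟨v', b'⟩ h
    simp only at h
    have hv : v = v' := by
      rw [← insLast_last n v b, ← insLast_last n v' b', h]
    subst hv
    have hb : b = b' := by
      apply Equiv.ext
      intro i
      have := congrArg (fun e : Equiv.Perm (Fin (n + 1)) => e i.castSucc) h
      simp only [insLast_castSucc] at this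
      exact Fin.succAbove_right_injective this
    simp [hb]
  · intro a
    set v := a (Fin.last n) with hv
    set e : Option (Fin n) ≃ Option (Fin n) :=
      (finSuccEquiv' (Fin.last n)).symm.trans (a.trans (finSuccEquiv' v)) with he
    have henone : e none = none := by
      simp [he, finSuccEquiv'_symm_none, ← hv, finSuccEquiv'_at]
    set b := e.removeNone with hb
    have hsome : ∀ i : Fin n, e (some i) = some (b i) := by
      intro i
      have hex : ∃ x', e (some i) = some x' := by
        rcases Option.eq_none_or_eq_some (e (some i)) with h | h
        · exfalso
          have := e.injective (h.trans henone.symm)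
          simp at this
        · exact h
      exact (Equiv.removeNone_some e hex).symm
    refine ⟨(v, b), ?_⟩
    apply Equiv.ext
    intro x
    obtain ⟨i, rfl⟩ | rfl := Fin.eq_castSucc_or_eq_last x
    · have h1 : e (some i) = finSuccEquiv' v (a i.castSucc) := by
        simp [he, finSuccEquiv'_symm_some, Fin.succAbove_last_apply]
      have h2 : some (b i) = finSuccEquiv' v (a i.castSucc) := by
        rw [← hsome, h1]
      have := congrArg (finSuccEquiv' v).symm h2
      rw [Equiv.symm_apply_apply, finSuccEquiv'_symm_some] at this
      simp only [insLast_castSucc]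
      exact this
    · simp [insLast_last]
      exact hv

/-- Generic subtype-of-product splitting equivalence. -/
def prodSubtypeSplit {α β : Type*} (P : α → Prop) (Q : β → Prop) :
    {p : α × β // P p.1 ∧ Q p.2} ≃ {v : α // P v} × {b : β // Q b} where
  toFun p := (⟨p.1.1, p.2.1⟩, ⟨p.1.2, p.2.2⟩)
  invFun q := ⟨(q.1.1, q.2.1), q.1.2, q.2.2⟩
  left_inv _ := rfl
  right_inv _ := rfl

lemma permCount_succ (n : ℕ) :
    permCount (n + 1) =
      Nat.card {v : Fin (n + 1) // v = 0 → Odd (n + 1)} * permCount n := by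
  have key : permCount (n + 1) =
      Nat.card {p : Fin (n + 1) × Equiv.Perm (Fin n) //
        (p.1 = 0 → Odd (n + 1)) ∧ lrmOddPerm n p.2} := by
    unfold permCount
    refine (Nat.card_eq_of_bijective
      (fun p => ⟨insLast n p.1.1 p.1.2,
        (lrm_insLast n p.1.1 p.1.2).mpr ⟨p.2.2, p.2.1⟩⟩) ?_).symm
    constructor
    · rintro ⟨⟨v, b⟩, h⟩ ⟨⟨v', b'⟩, h'⟩ hE
      have := (insLast_bijective n).1 (Subtype.ext_iff.mp hE)
      exact Subtype.ext this
    · rintro ⟨a, ha⟩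
      obtain ⟨⟨v, b⟩, hvb⟩ := (insLast_bijective n).2 a
      simp only at hvb
      have hP := (lrm_insLast n v b).mp (hvb ▸ ha)
      exact ⟨⟨(v, b), hP.2, hP.1⟩, Subtype.ext hvb⟩
  rw [key]
  refine (Nat.card_congr (prodSubtypeSplit (fun v : Fin (n + 1) => v = 0 → Odd (n + 1))
    (lrmOddPerm n))).trans ?_
  rw [Nat.card_prod]
  rfl

theorem permCount_recurrence :
    permCount 0 = 1 ∧
    ∀ n : ℕ, 1 ≤ n →
      (Odd n → permCount n = n * permCount (n - 1)) ∧
      (Even n → permCount n = (n - 1) * permCount (n - 1)) := by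
  constructor
  · unfold permCount
    have h : ∀ a : Equiv.Perm (Fin 0), lrmOddPerm 0 a := fun _ i => i.elim0
    rw [Nat.card_congr (Equiv.subtypeUnivEquiv h), Nat.card_eq_fintype_card]
    simp
  · intro n hn
    obtain ⟨m, rfl⟩ := Nat.exists_eq_add_of_le hn
    rw [Nat.add_comm 1 m]
    constructor
    · intro hodd
      rw [permCount_succ m]
      congr 1
      · have : ∀ v : Fin (m + 1), v = 0 → Odd (m + 1) := fun _ _ => hodd
        rw [Nat.card_congr (Equiv.subtypeUnivEquiv this),
          Nat.card_eq_fintype_card, Fintype.card_fin]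
    · intro heven
      rw [permCount_succ m]
      congr 1
      have hnotodd : ¬ Odd (m + 1) := Nat.not_odd_iff_even.mpr heven
      have hiff : ∀ v : Fin (m + 1), (v = 0 → Odd (m + 1)) ↔ ¬ (v = 0) := by
        intro v
        constructor
        · intro h hv0
          exact hnotodd (h hv0)
        · intro h hv0
          exact absurd hv0 h
      rw [Nat.card_congr (Equiv.subtypeEquivRight hiff),
        Nat.card_eq_fintype_card, Fintype.card_subtype_compl,
        Fintype.card_subtype_eq, Fintype.card_fin]
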